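/- Let G' be the odd-degree transformation of a finite simple graph G. Then every valid opinion profile μ' on G' is the odd-degree transformation of some valid opinion profile μ on G; that is, μ' agrees with a valid profile μ of G on the original vertices, and every auxiliary vertex of G' takes under μ' the same opinion as the vertex it is attached to. -/

import Mathlib

open Classical

/-- A binary opinion profile `μ` on a finite simple graph `G` is valid under the
local majority rule. -/
def IsValidProfile {V : Type*} [Fintype V] (G : SimpleGraph V) (μ : V → Bool) : Prop :=
  ∀ v : V,
    ((G.neighborFinset v).filter fun u => μ u = μ v).card ≥
    ((G.neighborFinset v).filter fun u => μ u ≠ μ v).card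

/-- The odd-degree transformation of `G`: keep all vertices and edges of `G`
(the left summands), and attach to each even-degree vertex `v` a new auxiliary
pendant vertex `Sum.inr ⟨v, _⟩` adjacent only to `v`. -/
def oddTransform {V : Type*} [Fintype V] (G : SimpleGraph V) :
    SimpleGraph (V ⊕ {v : V // Even (G.degree v)}) where
  Adj x y :=
    match x, y with
    | Sum.inl a, Sum.inl b => G.Adj a b
    | Sum.inl a, Sum.inr u => u.val = a
    | Sum.inr u, Sum.inl a => u.val = a
    | Sum.inr _, Sum.inr _ => False
  symm := by
    constructor
    intro x y h
    cases x <;> cases y <;> simp_all [SimpleGraph.adj_comm]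
  loopless := by
    constructor
    intro x h
    cases x <;> simp_all

/-- The odd-degree transformation of a profile `μ` on `G`: original vertices keep
their opinion, each auxiliary vertex copies the opinion of the vertex it is
attached to. -/
def oddTransformProfile {V : Type*} [Fintype V] (G : SimpleGraph V) (μ : V → Bool) :
    V ⊕ {v : V // Even (G.degree v)} → Bool :=
  Sum.elim μ (fun u => μ u.val)

/-- Every valid opinion profile on the odd-degree transformation of
`G` is the odd-degree transformation of some valid opinion profile on `G`. -/
theorem valid_profile_on_oddTransform_is_transform {V : Type*} [Fintype V]
    (G : SimpleGraph V) (μ' : V ⊕ {v : V // Even (G.degree v)} → Bool)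
    (h : IsValidProfile (oddTransform G) μ') :
    ∃ μ : V → Bool, IsValidProfile G μ ∧ μ' = oddTransformProfile G μ := by
  classical
  set μ : V → Bool := fun v => μ' (Sum.inl v) with hμ
  have nbr : ∀ u : {v : V // Even (G.degree v)},
      (oddTransform G).neighborFinset (Sum.inr u) = {Sum.inl u.val} := by
    intro u
    ext x
    cases x with
    | inl a => rw [SimpleGraph.mem_neighborFinset]; simp [SimpleGraph.mem_neighborFinset, oddTransform, eq_comm]
    | inr b => rw [SimpleGraph.mem_neighborFinset]; simp [SimpleGraph.mem_neighborFinset, oddTransform]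
  have haux : ∀ u, μ' (Sum.inr u) = μ u.val := by
    intro u
    have h1 := h (Sum.inr u)
    rw [nbr u] at h1
    by_contra hne
    simp only [Finset.filter_singleton] at h1
    have hne' : ¬ (μ' (Sum.inl u.val) = μ' (Sum.inr u)) := fun he => hne he.symm
    rw [if_neg hne', if_pos hne'] at h1
    simp at h1
  have nbl : ∀ v : V, (oddTransform G).neighborFinset (Sum.inl v) =
      (G.neighborFinset v).image Sum.inl ∪
      (Finset.univ.filter fun u : {w : V // Even (G.degree w)} => u.val = v).image Sum.inr := by
    intro v
    ext x
    cases x with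
    | inl a => rw [SimpleGraph.mem_neighborFinset]; simp [SimpleGraph.mem_neighborFinset, oddTransform]
    | inr b => rw [SimpleGraph.mem_neighborFinset]; simp [SimpleGraph.mem_neighborFinset, oddTransform]
  refine ⟨μ, ?_, ?_⟩
  · intro v
    have h1 := h (Sum.inl v)
    rw [nbl v] at h1
    rw [Finset.filter_union, Finset.filter_union] at h1
    have hdisj : ∀ p : (V ⊕ {w : V // Even (G.degree w)}) → Prop, ∀ [DecidablePred p],
        Disjoint (((G.neighborFinset v).image Sum.inl).filter p)
          (((Finset.univ.filter fun u : {w : V // Even (G.degree w)} => u.val = v).image Sum.inr).filter p) := by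
      intro p _
      apply Finset.disjoint_filter_filter
      simp [Finset.disjoint_left]
    rw [Finset.card_union_of_disjoint (hdisj _), Finset.card_union_of_disjoint (hdisj _)] at h1
    have himg : ∀ p : (V ⊕ {w : V // Even (G.degree w)}) → Prop, ∀ [DecidablePred p],
        (((G.neighborFinset v).image Sum.inl).filter p).card
          = ((G.neighborFinset v).filter fun u => p (Sum.inl u)).card := by
      intro p _
      rw [Finset.filter_image, Finset.card_image_of_injective _ Sum.inl_injective]
    rw [himg (fun x => μ' x = μ' (Sum.inl v)), himg (fun x => μ' x ≠ μ' (Sum.inl v))] at h1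
    set B := (Finset.univ.filter fun u : {w : V // Even (G.degree w)} => u.val = v).image
      (Sum.inr : {w : V // Even (G.degree w)} → V ⊕ {w : V // Even (G.degree w)}) with hB
    have hBfilt : (B.filter fun x => μ' x = μ' (Sum.inl v)) = B := by
      apply Finset.filter_true_of_mem
      intro x hx
      simp only [hB, Finset.mem_image, Finset.mem_filter] at hx
      obtain ⟨u, ⟨-, hu⟩, rfl⟩ := hx
      rw [haux u, hu]
    have hBfilt' : (B.filter fun x => μ' x ≠ μ' (Sum.inl v)) = ∅ := by
      have : (B.filter fun x => ¬ μ' x = μ' (Sum.inl v)) = ∅ := by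
        rw [Finset.filter_not, hBfilt, Finset.sdiff_self]
      exact this
    rw [hBfilt, hBfilt', Finset.card_empty] at h1
    have hsum : ((G.neighborFinset v).filter fun u => μ' (Sum.inl u) = μ' (Sum.inl v)).card +
        ((G.neighborFinset v).filter fun u => μ' (Sum.inl u) ≠ μ' (Sum.inl v)).card
        = G.degree v := by
      rw [← SimpleGraph.card_neighborFinset_eq_degree]
      exact Finset.card_filter_add_card_filter_not _
    simp only [hμ]
    by_cases hv : Even (G.degree v)
    · have hBcard : B.card = 1 := by
        rw [hB, Finset.card_image_of_injective _ Sum.inr_injective]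
        have he : (Finset.univ.filter fun u : {w : V // Even (G.degree w)} => u.val = v)
            = {⟨v, hv⟩} := by
          ext u
          simp [Subtype.ext_iff]
        rw [he, Finset.card_singleton]
      obtain ⟨r, hr⟩ := hv
      omega
    · have hBcard : B.card = 0 := by
        rw [hB]
        have he : (Finset.univ.filter fun u : {w : V // Even (G.degree w)} => u.val = v)
            = ∅ := by
          ext u
          simp only [Finset.mem_filter, Finset.mem_univ, true_and, Finset.notMem_empty,
            iff_false]
          intro he
          exact hv (he ▸ u.prop)
        rw [he]
        simp
      omega
  · funext x
    cases x with
    | inl a => rfl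
    | inr u => exact haux u
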